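/- Let φ, h ∈ H^∞(𝔻) and (p_n) a sequence of polynomials. Then p_n(φ) → h in the weak-star topology of H^∞(𝔻) (i.e., sup_n ‖p_n(φ)‖_∞ < ∞ and p_n(φ(a)) → h(a) for all a ∈ 𝔻) if and only if p_n(M_φ) → M_h in the weak operator topology on H²(𝔻). -/

import Mathlib

noncomputable section
open Complex Filter Topology

/-- The Hardy space `H²(𝔻)`, modelled as the Hilbert space of square-summable
Taylor coefficient sequences. -/
abbrev H2 : Type := lp (fun _ : ℕ => ℂ) 2

/-- The open unit disk `𝔻`. -/
def unitDisk : Set ℂ := Metric.ball 0 1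

/-- Evaluation of an element of `H²(𝔻)` at a point of the disk, via its Taylor series. -/
def ev (f : H2) (a : ℂ) : ℂ := ∑' n, f n * a ^ n

/-- `φ ∈ H^∞(𝔻)`: bounded analytic function on the unit disk. -/
def Hinf (φ : ℂ → ℂ) : Prop :=
  DifferentiableOn ℂ φ unitDisk ∧ ∃ C : ℝ, ∀ z ∈ unitDisk, ‖φ z‖ ≤ C

/-- `M` is the analytic Toeplitz (multiplication) operator `M_φ` with symbol `φ`. -/
def IsMulOp (φ : ℂ → ℂ) (M : H2 →L[ℂ] H2) : Prop :=
  ∀ (f : H2), ∀ a ∈ unitDisk, ev (M f) a = φ a * ev f a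

section Aux
open MeasureTheory AddCircle

local instance : Fact ((0:ℝ) < 1) := ⟨one_pos⟩

-- the ℤ-extension of a coefficient sequence
def zext (c : ℕ → ℂ) : ℤ → ℂ := fun m => if 0 ≤ m then c m.toNat else 0

lemma summable_zext {c : ℕ → ℂ} (hc : Summable fun n => ‖c n‖) :
    Summable fun m => ‖zext c m‖ := by
  have h1 : Summable fun n : ℕ => ‖zext c n‖ := by
    refine hc.congr fun n => ?_
    simp [zext]
  have h2 : Summable fun n : ℕ => ‖zext c (-(n+1))‖ := by
    refine summable_zero.congr fun n => ?_
    have : ¬ (0:ℤ) ≤ -((n:ℤ)+1) := by omega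
    simp only [zext, if_neg this, norm_zero]
  exact Summable.of_nat_of_neg_add_one h1 h2

set_option maxHeartbeats 2000000 in
lemma parseval_key {c : ℕ → ℂ} (hc : Summable fun n => ‖c n‖) :
    ∃ G : C(AddCircle (1:ℝ), ℂ),
      (∀ x : AddCircle (1:ℝ), HasSum (fun n : ℕ => c n * fourier (n:ℤ) x) (G x)) ∧
      ∫ x : AddCircle (1:ℝ), ‖G x‖ ^ 2 ∂haarAddCircle = ∑' n : ℕ, ‖c n‖ ^ 2 := by
  set cz := zext c with hcz
  have hczs : Summable fun m => ‖cz m‖ := summable_zext hc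
  have hsum : Summable fun i : ℤ => cz i • (fourier i : C(AddCircle (1:ℝ), ℂ)) := by
    refine Summable.of_norm ?_
    refine hczs.congr fun i => ?_
    rw [norm_smul, fourier_norm, mul_one]
  set G : C(AddCircle (1:ℝ), ℂ) := ∑' i : ℤ, cz i • (fourier i) with hGdef
  have hG : HasSum (fun i : ℤ => cz i • (fourier i : C(AddCircle (1:ℝ), ℂ))) G := hsum.hasSum
  have hrange : ∀ i : ℤ, i ∉ Set.range ((↑) : ℕ → ℤ) → cz i = 0 := by
    intro i hi
    have : ¬ (0:ℤ) ≤ i := by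
      intro h0
      exact hi ⟨i.toNat, by omega⟩
    simp only [hcz, zext, if_neg this]
  have hGx : ∀ x : AddCircle (1:ℝ), HasSum (fun n : ℕ => c n * fourier (n:ℤ) x) (G x) := by
    intro x
    have h1 : HasSum (fun i : ℤ => cz i • fourier i x) (G x) :=
      (ContinuousMap.evalCLM (R := ℂ) x).hasSum hG
    have h2 := (Function.Injective.hasSum_iff
      (Nat.cast_injective : Function.Injective ((↑) : ℕ → ℤ))
      (fun i hi => by rw [hrange i hi, zero_smul])).2 h1
    refine h2.congr_fun fun n => ?_
    simp only [Function.comp_apply, hcz, zext, Int.toNat_natCast, smul_eq_mul,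
      if_pos (Int.natCast_nonneg n)]
  refine ⟨G, hGx, ?_⟩
  set gl : Lp ℂ 2 haarAddCircle := ContinuousMap.toLp 2 haarAddCircle ℂ G with hgldef
  have hgl : HasSum (fun i : ℤ => cz i • fourierLp (T := (1:ℝ)) 2 i) gl := by
    have := (ContinuousMap.toLp 2 haarAddCircle ℂ).hasSum hG
    simpa only [_root_.map_smul] using this
  have hcoeff : ∀ m : ℤ, fourierCoeff (gl : AddCircle (1:ℝ) → ℂ) m = cz m := by
    intro m
    rw [← fourierBasis_repr (T := (1:ℝ)), HilbertBasis.repr_apply_apply, coe_fourierBasis]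
    have h3 : HasSum (fun i : ℤ => (inner ℂ (fourierLp (T := (1:ℝ)) 2 m) (cz i • fourierLp (T := (1:ℝ)) 2 i) : ℂ))
        (inner ℂ (fourierLp (T := (1:ℝ)) 2 m) gl : ℂ) := (innerSL ℂ (fourierLp (T := (1:ℝ)) 2 m)).hasSum hgl
    have h4 : (fun i : ℤ => (inner ℂ (fourierLp (T := (1:ℝ)) 2 m) (cz i • fourierLp (T := (1:ℝ)) 2 i) : ℂ))
        = fun i : ℤ => if i = m then cz m else 0 := by
      funext i
      rw [inner_smul_right]
      rw [orthonormal_iff_ite.1 orthonormal_fourier m i]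
      by_cases h : m = i
      · subst h; simp
      · simp [h, Ne.symm h]
    rw [h4] at h3
    exact h3.unique (hasSum_ite_eq m (cz m))
  have hpars := tsum_sq_fourierCoeff gl
  simp only [hcoeff] at hpars
  have hL : ∑' i : ℤ, ‖cz i‖ ^ 2 = ∑' n : ℕ, ‖c n‖ ^ 2 := by
    have hs : Function.support (fun i : ℤ => ‖cz i‖ ^ 2) ⊆ Set.range ((↑) : ℕ → ℤ) := by
      intro i hi
      by_contra hmem
      exact hi (by simp [hrange i hmem])
    rw [← Function.Injective.tsum_eq
      (Nat.cast_injective : Function.Injective ((↑) : ℕ → ℤ)) hs]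
    exact tsum_congr fun n => by
      simp only [hcz, zext, Int.toNat_natCast, if_pos (Int.natCast_nonneg n)]
  rw [← hL, hpars]
  refine integral_congr_ae ?_
  filter_upwards [ContinuousMap.coeFn_toLp (p := 2) haarAddCircle (𝕜 := ℂ) G] with x hx
  rw [hgldef, hx]


lemma mem_unitDisk {a : ℂ} : a ∈ unitDisk ↔ ‖a‖ < 1 := by
  simp [unitDisk, Metric.mem_ball, dist_eq_norm]

lemma summable_coeff_mul_pow (f : H2) {a : ℂ} (ha : ‖a‖ < 1) :
    Summable fun n : ℕ => ‖f n * a ^ n‖ := by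
  refine Summable.of_nonneg_of_le (fun n => norm_nonneg _) (fun n => ?_)
    (((summable_geometric_of_lt_one (norm_nonneg a) ha)).mul_left ‖f‖)
  rw [norm_mul, norm_pow]
  exact mul_le_mul_of_nonneg_right (lp.norm_apply_le_norm two_ne_zero f n) (by positivity)

lemma hasSum_ev (f : H2) {a : ℂ} (ha : ‖a‖ < 1) :
    HasSum (fun n : ℕ => f n * a ^ n) (ev f a) :=
  ((summable_coeff_mul_pow f ha).of_norm).hasSum

lemma fourier_int_natCast_eq_pow (n : ℕ) (x : AddCircle (1:ℝ)) :
    fourier (n : ℤ) x = (fourier (1:ℤ) x) ^ n := by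
  induction n with
  | zero => simp [fourier_zero]
  | succ k ih =>
      push_cast
      rw [fourier_add, ih, pow_succ, mul_comm]

lemma norm_fourier_one (x : AddCircle (1:ℝ)) : ‖fourier (1:ℤ) x‖ = 1 := by
  rw [fourier_apply, Circle.norm_coe]

lemma parseval_dilate (f : H2) {r : ℝ} (hr0 : 0 < r) (hr1 : r < 1) :
    ∃ G : C(AddCircle (1:ℝ), ℂ),
      (∀ x : AddCircle (1:ℝ), G x = ev f ((r : ℂ) * fourier (1:ℤ) x)) ∧
      ∫ x : AddCircle (1:ℝ), ‖G x‖ ^ 2 ∂haarAddCircle = ∑' n : ℕ, ‖f n‖ ^ 2 * r ^ (2 * n) := by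
  have hrc : ‖(r : ℂ)‖ < 1 := by
    rwa [Complex.norm_real, Real.norm_of_nonneg hr0.le]
  have hc : Summable fun n : ℕ => ‖f n * (r : ℂ) ^ n‖ := summable_coeff_mul_pow f hrc
  obtain ⟨G, hGx, hint⟩ := parseval_key hc
  refine ⟨G, fun x => ?_, ?_⟩
  · have h1 : HasSum (fun n : ℕ => f n * ((r : ℂ) * fourier (1:ℤ) x) ^ n)
        (ev f ((r : ℂ) * fourier (1:ℤ) x)) := by
      refine hasSum_ev f ?_
      rw [norm_mul, norm_fourier_one, mul_one]
      exact hrc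
    have h2 : (fun n : ℕ => f n * ((r : ℂ) * fourier (1:ℤ) x) ^ n)
        = fun n : ℕ => (f n * (r:ℂ) ^ n) * fourier (n : ℤ) x := by
      funext n
      rw [mul_pow, fourier_int_natCast_eq_pow]
      ring
    rw [h2] at h1
    exact (hGx x).unique h1
  · rw [hint]
    refine tsum_congr fun n => ?_
    rw [norm_mul, mul_pow, norm_pow, Complex.norm_real, Real.norm_of_nonneg hr0.le,
      ← pow_mul, mul_comm n 2]

lemma summable_sq (f : H2) : Summable fun n : ℕ => ‖f n‖ ^ 2 := by
  have h := (lp.memℓp f).summable (p := 2) (by norm_num)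
  refine h.congr fun n => ?_
  norm_num

lemma norm_sq_eq_tsum (f : H2) : ‖f‖ ^ 2 = ∑' n : ℕ, ‖f n‖ ^ 2 := by
  have h := lp.norm_rpow_eq_tsum (p := 2) (by norm_num) f
  norm_num at h
  exact_mod_cast h

lemma isMulOp_norm_le {ψ : ℂ → ℂ} {M : H2 →L[ℂ] H2} (hM : IsMulOp ψ M) {C : ℝ}
    (hC : ∀ z ∈ unitDisk, ‖ψ z‖ ≤ C) : ‖M‖ ≤ C := by
  have hC0 : 0 ≤ C := le_trans (norm_nonneg _) (hC 0 (by simp [unitDisk]))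
  refine M.opNorm_le_bound hC0 fun f => ?_
  have key : ∀ s : Finset ℕ, ∑ n ∈ s, ‖(M f) n‖ ^ 2 ≤ C ^ 2 * ‖f‖ ^ 2 := by
    intro s
    -- the sequence r k → 1
    set rs : ℕ → ℝ := fun k => 1 - ((k:ℝ) + 2)⁻¹ with hrs
    have hrs0 : ∀ k, 0 < rs k := by
      intro k
      have h1 : ((k:ℝ) + 2)⁻¹ ≤ 2⁻¹ := by
        rw [inv_le_inv₀ (by positivity) (by norm_num)]
        · linarith [Nat.cast_nonneg (α := ℝ) k]
      simp only [hrs]; linarith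
    have hrs1 : ∀ k, rs k < 1 := by
      intro k
      have : (0:ℝ) < ((k:ℝ) + 2)⁻¹ := by positivity
      simp only [hrs]; linarith
    have hrslim : Filter.Tendsto rs atTop (𝓝 1) := by
      have h2 : Filter.Tendsto (fun k : ℕ => ((k:ℝ) + 2)) atTop atTop :=
        Filter.tendsto_atTop_add_const_right _ 2 tendsto_natCast_atTop_atTop
      have h3 := h2.inv_tendsto_atTop
      have h4 := ((tendsto_const_nhds :
        Filter.Tendsto (fun _ : ℕ => (1:ℝ)) atTop (𝓝 1)).sub h3)
      simpa using h4
    -- bound for each k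
    have hbound : ∀ k, ∑ n ∈ s, ‖(M f) n‖ ^ 2 * (rs k) ^ (2 * n) ≤ C ^ 2 * ‖f‖ ^ 2 := by
      intro k
      obtain ⟨G1, hG1x, hG1⟩ := parseval_dilate (M f) (hrs0 k) (hrs1 k)
      obtain ⟨G2, hG2x, hG2⟩ := parseval_dilate f (hrs0 k) (hrs1 k)
      have hsum2 : Summable fun n : ℕ => ‖(M f) n‖ ^ 2 * (rs k) ^ (2 * n) := by
        refine Summable.of_nonneg_of_le
          (fun n => mul_nonneg (sq_nonneg _) (pow_nonneg (hrs0 k).le _))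
          (fun n => ?_) (summable_sq (M f))
        have h5 : (rs k) ^ (2 * n) ≤ 1 :=
          pow_le_one₀ (hrs0 k).le (hrs1 k).le
        nlinarith [sq_nonneg ‖(M f) n‖, pow_nonneg (hrs0 k).le (2*n)]
      have hle1 : ∑ n ∈ s, ‖(M f) n‖ ^ 2 * (rs k) ^ (2 * n)
          ≤ ∑' n : ℕ, ‖(M f) n‖ ^ 2 * (rs k) ^ (2 * n) :=
        Summable.sum_le_tsum s (fun n _ => mul_nonneg (sq_nonneg _) (pow_nonneg (hrs0 k).le _)) hsum2
      have hptwise : ∀ x : AddCircle (1:ℝ), ‖G1 x‖ ^ 2 ≤ C ^ 2 * ‖G2 x‖ ^ 2 := by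
        intro x
        have hmem : ((rs k : ℂ) * fourier (1:ℤ) x) ∈ unitDisk := by
          rw [mem_unitDisk, norm_mul, norm_fourier_one, mul_one, Complex.norm_real,
            Real.norm_of_nonneg (hrs0 k).le]
          exact hrs1 k
        have h6 : G1 x = ψ ((rs k : ℂ) * fourier (1:ℤ) x) * G2 x := by
          rw [hG1x x, hG2x x, hM f _ hmem]
        rw [h6, norm_mul, mul_pow]
        have h7 := hC _ hmem
        exact mul_le_mul_of_nonneg_right
          (by nlinarith [norm_nonneg (ψ ((rs k : ℂ) * fourier (1:ℤ) x))]) (sq_nonneg _)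
      have hint1 : MeasureTheory.Integrable (fun x : AddCircle (1:ℝ) => ‖G1 x‖ ^ 2) haarAddCircle := by
        exact (Continuous.integrable_of_hasCompactSupport (G1.continuous.norm.pow 2)
          (HasCompactSupport.of_compactSpace _))
      have hint2 : MeasureTheory.Integrable (fun x : AddCircle (1:ℝ) => C ^ 2 * ‖G2 x‖ ^ 2) haarAddCircle := by
        exact ((Continuous.integrable_of_hasCompactSupport (G2.continuous.norm.pow 2)
          (HasCompactSupport.of_compactSpace _)).const_mul _)
      have hintle := MeasureTheory.integral_mono hint1 hint2 hptwise
      rw [MeasureTheory.integral_const_mul] at hintle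
      rw [hG1, hG2] at hintle
      refine le_trans hle1 (le_trans hintle ?_)
      have h8 : ∑' n : ℕ, ‖f n‖ ^ 2 * (rs k) ^ (2 * n) ≤ ‖f‖ ^ 2 := by
        rw [norm_sq_eq_tsum f]
        refine Summable.tsum_le_tsum (fun n => ?_) ?_ (summable_sq f)
        · have h5 : (rs k) ^ (2 * n) ≤ 1 := pow_le_one₀ (hrs0 k).le (hrs1 k).le
          nlinarith [sq_nonneg ‖f n‖, pow_nonneg (hrs0 k).le (2*n)]
        · refine Summable.of_nonneg_of_le
            (fun n => mul_nonneg (sq_nonneg _) (pow_nonneg (hrs0 k).le _))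
            (fun n => ?_) (summable_sq f)
          have h5 : (rs k) ^ (2 * n) ≤ 1 := pow_le_one₀ (hrs0 k).le (hrs1 k).le
          nlinarith [sq_nonneg ‖f n‖, pow_nonneg (hrs0 k).le (2*n)]
      exact mul_le_mul_of_nonneg_left h8 (by positivity)
    -- take k → ∞
    have hlim : Filter.Tendsto (fun k => ∑ n ∈ s, ‖(M f) n‖ ^ 2 * (rs k) ^ (2 * n)) atTop
        (𝓝 (∑ n ∈ s, ‖(M f) n‖ ^ 2)) := by
      have : ∀ n ∈ s, Filter.Tendsto (fun k => ‖(M f) n‖ ^ 2 * (rs k) ^ (2 * n)) atTop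
          (𝓝 (‖(M f) n‖ ^ 2)) := by
        intro n _
        have := (hrslim.pow (2 * n)).const_mul (‖(M f) n‖ ^ 2)
        simpa using this
      exact tendsto_finset_sum s this
    exact le_of_tendsto hlim (Filter.Eventually.of_forall hbound)
  have hfin : ‖M f‖ ^ 2 ≤ (C * ‖f‖) ^ 2 := by
    rw [norm_sq_eq_tsum (M f), mul_pow]
    exact Summable.tsum_le_of_sum_le (summable_sq (M f)) key
  nlinarith [norm_nonneg (M f), mul_nonneg hC0 (norm_nonneg f)]

lemma memℓp_pow {a : ℂ} (ha : ‖a‖ < 1) : Memℓp (fun n : ℕ => (starRingEnd ℂ a) ^ n) 2 := by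
  have h2 : (0:ℝ) < (2 : ENNReal).toReal := by norm_num
  refine (memℓp_gen_iff h2).2 ?_
  have : Summable (fun n : ℕ => (‖a‖ ^ 2) ^ n) :=
    summable_geometric_of_lt_one (by positivity) (by nlinarith [norm_nonneg a])
  refine this.congr fun n => ?_
  simp [norm_pow, ← pow_mul, mul_comm, pow_mul]
  ring

def ker {a : ℂ} (ha : ‖a‖ < 1) : H2 := ⟨(fun n : ℕ => (starRingEnd ℂ a) ^ n), memℓp_pow ha⟩

@[simp] lemma ker_apply {a : ℂ} (ha : ‖a‖ < 1) (n : ℕ) : (ker ha) n = (starRingEnd ℂ a) ^ n := rfl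

lemma ev_eq_inner (f : H2) {a : ℂ} (ha : ‖a‖ < 1) : ev f a = inner ℂ (ker ha) f := by
  rw [lp.inner_eq_tsum, ev]
  congr 1; ext n
  simp [RCLike.inner_apply, mul_comm, ← map_pow]

lemma one_le_norm_ker {a : ℂ} (ha : ‖a‖ < 1) : 1 ≤ ‖ker ha‖ := by
  have := lp.norm_apply_le_norm two_ne_zero (ker ha) 0
  simpa using this

lemma ev_eq_zero_imp_zero {f : H2} (h : ∀ a ∈ unitDisk, ev f a = 0) : f = 0 := by
  obtain ⟨G, hGx, hG⟩ := parseval_dilate f (r := 1/2) (by norm_num) (by norm_num)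
  have hG0 : ∀ x : AddCircle (1:ℝ), G x = 0 := by
    intro x
    rw [hGx x]
    refine h _ ?_
    rw [mem_unitDisk, norm_mul, norm_fourier_one, mul_one]
    rw [show ((1/2 : ℝ) : ℂ) = (1/2 : ℂ) by norm_num]
    simp only [norm_div, norm_one, Complex.norm_ofNat]
    norm_num
  have hzero : ∑' n : ℕ, ‖f n‖ ^ 2 * (1/2 : ℝ) ^ (2 * n) = 0 := by
    rw [← hG]
    have : (fun x : AddCircle (1:ℝ) => ‖G x‖ ^ 2) = fun _ => 0 := by
      funext x; rw [hG0 x]; simp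
    rw [this]
    simp
  have hsumm : Summable fun n : ℕ => ‖f n‖ ^ 2 * (1/2 : ℝ) ^ (2 * n) := by
    refine Summable.of_nonneg_of_le (fun n => by positivity) (fun n => ?_) (summable_sq f)
    have : ((1:ℝ)/2) ^ (2*n) ≤ 1 := pow_le_one₀ (by norm_num) (by norm_num)
    nlinarith [sq_nonneg ‖f n‖]
  have heach : ∀ n : ℕ, ‖f n‖ ^ 2 * (1/2 : ℝ) ^ (2 * n) = 0 := by
    intro n
    have h1 := hsumm.le_tsum n (fun m _ => by positivity)
    have h2 : (0:ℝ) ≤ ‖f n‖ ^ 2 * (1/2 : ℝ) ^ (2 * n) := by positivity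
    rw [hzero] at h1
    linarith
  ext n
  have := heach n
  have hpow : (0:ℝ) < (1/2 : ℝ) ^ (2 * n) := by positivity
  have : ‖f n‖ ^ 2 = 0 := by
    rcases mul_eq_zero.1 this with h' | h'
    · exact h'
    · exact absurd h' hpow.ne'
  have : ‖f n‖ = 0 := by nlinarith [norm_nonneg (f n)]
  simpa using this

lemma dense_ker_span :
    Dense ((Submodule.span ℂ {g : H2 | ∃ a : ℂ, ∃ ha : ‖a‖ < 1, g = ker ha}) : Set H2) := by
  rw [Submodule.dense_iff_topologicalClosure_eq_top,
    Submodule.topologicalClosure_eq_top_iff]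
  rw [Submodule.eq_bot_iff]
  intro f hf
  refine ev_eq_zero_imp_zero fun a ha => ?_
  rw [mem_unitDisk] at ha
  rw [ev_eq_inner f ha]
  exact hf (ker ha) (Submodule.subset_span ⟨a, ha, rfl⟩)

lemma norm_symbol_le {ψ : ℂ → ℂ} {M : H2 →L[ℂ] H2} (hM : IsMulOp ψ M) :
    ∀ a ∈ unitDisk, ‖ψ a‖ ≤ ‖M‖ := by
  intro a hamem
  have ha : ‖a‖ < 1 := mem_unitDisk.1 hamem
  set u : H2 := ker ha with hu
  have h1 : (inner ℂ u (M u) : ℂ) = ψ a * inner ℂ u u := by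
    rw [← ev_eq_inner (M u) ha, hM u a hamem, ev_eq_inner u ha]
  have h2 : ‖(inner ℂ u (M u) : ℂ)‖ ≤ ‖u‖ * (‖M‖ * ‖u‖) :=
    le_trans (norm_inner_le_norm u (M u)) (mul_le_mul_of_nonneg_left (M.le_opNorm u) (norm_nonneg u))
  have h3 : (inner ℂ u u : ℂ) = (‖u‖ : ℂ) ^ 2 := inner_self_eq_norm_sq_to_K u
  rw [h1, h3] at h2
  have h4 : ‖ψ a * (‖u‖ : ℂ) ^ 2‖ = ‖ψ a‖ * ‖u‖ ^ 2 := by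
    rw [norm_mul, norm_pow, Complex.norm_real, Real.norm_of_nonneg (norm_nonneg u)]
  rw [h4] at h2
  have h5 : (0:ℝ) < ‖u‖ ^ 2 := by
    have := one_le_norm_ker ha
    nlinarith
  nlinarith

lemma ev_add (f g : H2) {a : ℂ} (ha : ‖a‖ < 1) : ev (f + g) a = ev f a + ev g a := by
  rw [ev_eq_inner _ ha, ev_eq_inner f ha, ev_eq_inner g ha, inner_add_right]

lemma ev_smul (c : ℂ) (f : H2) {a : ℂ} (ha : ‖a‖ < 1) : ev (c • f) a = c * ev f a := by
  rw [ev_eq_inner _ ha, ev_eq_inner f ha, inner_smul_right]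

lemma ev_pow_apply {φ : ℂ → ℂ} {Mφ : H2 →L[ℂ] H2} (hMφ : IsMulOp φ Mφ) (k : ℕ) (f : H2)
    {a : ℂ} (ha : a ∈ unitDisk) : ev ((Mφ ^ k) f) a = (φ a) ^ k * ev f a := by
  induction k generalizing f with
  | zero => simp
  | succ m ih =>
      have : (Mφ ^ (m+1)) f = (Mφ ^ m) (Mφ f) := by
        rw [pow_succ]
        rfl
      rw [this, ih (Mφ f), hMφ f a ha, pow_succ]
      ring

lemma ev_aeval {φ : ℂ → ℂ} {Mφ : H2 →L[ℂ] H2} (hMφ : IsMulOp φ Mφ) (q : Polynomial ℂ) (f : H2)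
    {a : ℂ} (ha : a ∈ unitDisk) :
    ev ((Polynomial.aeval Mφ q : H2 →L[ℂ] H2) f) a = q.eval (φ a) * ev f a := by
  have ha' : ‖a‖ < 1 := mem_unitDisk.1 ha
  induction q using Polynomial.induction_on' with
  | add p q hp hq =>
      rw [map_add, ContinuousLinearMap.add_apply, ev_add _ _ ha', hp, hq,
        Polynomial.eval_add]
      ring
  | monomial n b =>
      rw [Polynomial.aeval_monomial, Polynomial.eval_monomial]
      have : ((algebraMap ℂ (H2 →L[ℂ] H2)) b * Mφ ^ n) f = b • ((Mφ ^ n) f) := by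
        rw [Algebra.algebraMap_eq_smul_one]
        simp [ContinuousLinearMap.smul_apply]
      rw [this, ev_smul _ _ ha', ev_pow_apply hMφ n f ha]
      ring

lemma tendsto_inner_of_dense {x : ℕ → H2} {y : H2} {B : ℝ} (hB : ∀ n, ‖x n‖ ≤ B)
    {s : Set H2} (hs : Dense s)
    (hconv : ∀ g ∈ s, Filter.Tendsto (fun n => (inner ℂ (x n) g : ℂ)) atTop (𝓝 (inner ℂ y g)))
    (g : H2) : Filter.Tendsto (fun n => (inner ℂ (x n) g : ℂ)) atTop (𝓝 (inner ℂ y g)) := by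
  rw [Metric.tendsto_atTop]
  intro ε hε
  set B' : ℝ := max B ‖y‖ + 1 with hB'
  have hB'pos : 0 < B' := by
    have : (0:ℝ) ≤ max B ‖y‖ := le_trans (norm_nonneg y) (le_max_right _ _)
    linarith
  have hδ : 0 < ε / (3 * B') := by positivity
  obtain ⟨g', hg's, hg'⟩ := Metric.mem_closure_iff.1 (hs g) _ hδ
  obtain ⟨N, hN⟩ := Metric.tendsto_atTop.1 (hconv g' hg's) (ε/3) (by positivity)
  refine ⟨N, fun n hn => ?_⟩
  have key : ∀ z : H2, ‖z‖ ≤ B' → ‖(inner ℂ z g : ℂ) - inner ℂ z g'‖ < ε / 3 := by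
    intro z hz
    rw [← inner_sub_right]
    calc ‖(inner ℂ z (g - g') : ℂ)‖ ≤ ‖z‖ * ‖g - g'‖ := norm_inner_le_norm _ _
      _ < B' * (ε / (3 * B')) := by
          have h1 : ‖g - g'‖ < ε / (3 * B') := by rwa [← dist_eq_norm]
          have h2 : (0:ℝ) ≤ ‖g - g'‖ := norm_nonneg _
          nlinarith [lt_of_le_of_lt (le_trans (norm_nonneg z) hz) (lt_add_one B')]
      _ = ε / 3 := by field_simp
  have hxb : ∀ n, ‖x n‖ ≤ B' := fun n =>
    le_trans (hB n) (by rw [hB']; exact le_trans (le_max_left _ _) (by linarith))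
  have hyb : ‖y‖ ≤ B' := by rw [hB']; exact le_trans (le_max_right _ _) (by linarith)
  have h3 := hN n hn
  rw [dist_eq_norm] at h3 ⊢
  have expand : (inner ℂ (x n) g : ℂ) - inner ℂ y g =
      ((inner ℂ (x n) g : ℂ) - inner ℂ (x n) g') + ((inner ℂ (x n) g' : ℂ) - inner ℂ y g')
      + ((inner ℂ y g' : ℂ) - inner ℂ y g) := by ring
  rw [expand]
  calc ‖_ + _ + _‖ ≤ ‖((inner ℂ (x n) g : ℂ) - inner ℂ (x n) g') + ((inner ℂ (x n) g' : ℂ) - inner ℂ y g')‖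
        + ‖(inner ℂ y g' : ℂ) - inner ℂ y g‖ := norm_add_le _ _
    _ ≤ ‖(inner ℂ (x n) g : ℂ) - inner ℂ (x n) g'‖ + ‖(inner ℂ (x n) g' : ℂ) - inner ℂ y g'‖
        + ‖(inner ℂ y g' : ℂ) - inner ℂ y g‖ := by
          have := norm_add_le ((inner ℂ (x n) g : ℂ) - inner ℂ (x n) g')
            ((inner ℂ (x n) g' : ℂ) - inner ℂ y g')
          linarith
    _ < ε / 3 + ε / 3 + ε / 3 := by
        have k1 := key (x n) (hxb n)
        have k2 : ‖(inner ℂ y g' : ℂ) - inner ℂ y g‖ < ε / 3 := by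
          have := key y hyb
          rw [← norm_neg]
          simpa [neg_sub] using this
        linarith [h3]
    _ = ε := by ring


end Aux

/-- For `φ, h ∈ H^∞(𝔻)` and polynomials `(p_n)`: `p_n(φ) → h` weak-star in `H^∞(𝔻)`
(uniformly bounded and pointwise convergent on `𝔻`) if and only if
`p_n(M_φ) → M_h` in the weak operator topology on `H²(𝔻)`. -/
theorem weakStar_tendsto_iff_wot_tendsto
    (φ h : ℂ → ℂ) (hφ : Hinf φ) (hh : Hinf h) (p : ℕ → Polynomial ℂ)
    (Mφ : H2 →L[ℂ] H2) (hMφ : IsMulOp φ Mφ)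
    (Mh : H2 →L[ℂ] H2) (hMh : IsMulOp h Mh) :
    ((∃ C : ℝ, ∀ n, ∀ z ∈ unitDisk, ‖(p n).eval (φ z)‖ ≤ C) ∧
        ∀ a ∈ unitDisk, Tendsto (fun n => (p n).eval (φ a)) atTop (𝓝 (h a))) ↔
      ∀ f g : H2, Tendsto (fun n => (inner ℂ ((Polynomial.aeval Mφ (p n) : H2 →L[ℂ] H2) f) g : ℂ))
        atTop (𝓝 (inner ℂ (Mh f) g : ℂ)) := by
  set T : ℕ → (H2 →L[ℂ] H2) := fun n => (Polynomial.aeval Mφ (p n) : H2 →L[ℂ] H2) with hT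
  have hTmul : ∀ n, IsMulOp (fun z => (p n).eval (φ z)) (T n) :=
    fun n f' a ha => ev_aeval hMφ (p n) f' ha
  constructor
  · rintro ⟨⟨C, hC⟩, hpt⟩ f g
    have hTnorm : ∀ n, ‖T n‖ ≤ C := fun n => isMulOp_norm_le (hTmul n) (hC n)
    have hxB : ∀ n, ‖T n f‖ ≤ C * ‖f‖ := fun n =>
      le_trans ((T n).le_opNorm f) (mul_le_mul_of_nonneg_right (hTnorm n) (norm_nonneg f))
    refine tendsto_inner_of_dense hxB dense_ker_span ?_ g
    intro g' hg'
    induction hg' using Submodule.span_induction with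
    | mem u hu =>
        obtain ⟨a, ha, rfl⟩ := hu
        have hamem : a ∈ unitDisk := mem_unitDisk.2 ha
        have hform : ∀ x : H2, (inner ℂ x (ker ha) : ℂ) = starRingEnd ℂ (ev x a) := by
          intro x
          rw [ev_eq_inner x ha, inner_conj_symm]
        have hbase : Tendsto (fun n => (p n).eval (φ a) * ev f a) atTop (𝓝 (h a * ev f a)) :=
          (hpt a hamem).mul_const (ev f a)
        have hconj : Tendsto (fun n => starRingEnd ℂ ((p n).eval (φ a) * ev f a)) atTop
            (𝓝 (starRingEnd ℂ (h a * ev f a))) :=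
          ((Complex.continuous_conj).tendsto _).comp hbase
        have heq1 : ∀ n, (inner ℂ (T n f) (ker ha) : ℂ)
            = starRingEnd ℂ ((p n).eval (φ a) * ev f a) := by
          intro n
          rw [hform, hTmul n f a hamem]
        have heq2 : (inner ℂ (Mh f) (ker ha) : ℂ) = starRingEnd ℂ (h a * ev f a) := by
          rw [hform, hMh f a hamem]
        rw [heq2]
        exact hconj.congr fun n => (heq1 n).symm
    | zero => simp
    | add u v hu hv hiu hiv =>
        simp only [inner_add_right]
        exact hiu.add hiv
    | smul c u hu hiu =>
        simp only [inner_smul_right]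
        exact hiu.const_mul c
  · intro hwot
    have hTb : ∃ C', ∀ n, ‖T n‖ ≤ C' := by
      refine banach_steinhaus fun f => ?_
      have h1 : ∀ g : H2, ∃ b : ℝ, ∀ n, ‖(innerSL ℂ (T n f)) g‖ ≤ b := by
        intro g
        obtain ⟨b, hb⟩ := (hwot f g).norm.bddAbove_range
        exact ⟨b, fun n => hb ⟨n, rfl⟩⟩
      obtain ⟨b, hb⟩ := banach_steinhaus h1
      exact ⟨b, fun n => (innerSL_apply_norm (𝕜 := ℂ) (T n f)) ▸ hb n⟩
    obtain ⟨C', hC'⟩ := hTb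
    constructor
    · exact ⟨C', fun n z hz => le_trans (norm_symbol_le (hTmul n) z hz) (hC' n)⟩
    · intro a hamem
      have ha : ‖a‖ < 1 := mem_unitDisk.1 hamem
      set e0 : H2 := lp.single 2 0 1 with he0def
      have he0 : ev e0 a = 1 := by
        rw [ev]
        rw [tsum_eq_single 0 (fun n hn => ?_)]
        · simp [he0def, lp.single_apply]
        · simp [he0def, lp.single_apply, hn]
      have hform : ∀ x : H2, (inner ℂ x (ker ha) : ℂ) = starRingEnd ℂ (ev x a) := by
        intro x
        rw [ev_eq_inner x ha, inner_conj_symm]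
      have h2 := hwot e0 (ker ha)
      have h3 : ∀ n, (inner ℂ (T n e0) (ker ha) : ℂ) = starRingEnd ℂ ((p n).eval (φ a)) := by
        intro n
        rw [hform, hTmul n e0 a hamem, he0, mul_one]
      have h4 : (inner ℂ (Mh e0) (ker ha) : ℂ) = starRingEnd ℂ (h a) := by
        rw [hform, hMh e0 a hamem, he0, mul_one]
      rw [h4] at h2
      replace h2 : Tendsto (fun n => (inner ℂ (T n e0) (ker ha) : ℂ)) atTop
          (𝓝 (starRingEnd ℂ (h a))) := h2
      simp only [h3] at h2
      have h5 := ((Complex.continuous_conj).tendsto _).comp h2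
      simp only [Function.comp_def, Complex.conj_conj] at h5
      exact h5
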